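/- Let g:(a,b)→ℝ be a C² function with |g''(x)| ≤ C/(x-a)² + C/(b-x)² for all x∈(a,b). Let y₀=(a+b)/2 and suppose there exists x₀∈(a,b) with g'(x₀)=0. Then for every x∈(a,b), |g(x)-g(y₀)| ≤ C(-log((x-a)/(b-a)) - log((b-x)/(b-a)) + (b-a)/(x₀-a) + (b-a)/(b-x₀)). -/

import Mathlib

open MeasureTheory Set

theorem ftc_abs_bound {a b : ℝ} {f f' B φ : ℝ → ℝ}
    (hf : ∀ x ∈ Set.Ioo a b, HasDerivAt f (f' x) x)
    (hf'c : ContinuousOn f' (Set.Ioo a b))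
    (hφ : ∀ x ∈ Set.Ioo a b, HasDerivAt φ (B x) x)
    (hBc : ContinuousOn B (Set.Ioo a b))
    (hle : ∀ x ∈ Set.Ioo a b, |f' x| ≤ B x)
    {p q : ℝ} (hp : p ∈ Set.Ioo a b) (hq : q ∈ Set.Ioo a b) (hpq : p ≤ q) :
    |f q - f p| ≤ φ q - φ p := by
  have hIcc : Set.Icc p q ⊆ Set.Ioo a b := fun t ht =>
    ⟨lt_of_lt_of_le hp.1 ht.1, lt_of_le_of_lt ht.2 hq.2⟩
  have huIcc : Set.uIcc p q ⊆ Set.Ioo a b := by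
    rw [Set.uIcc_of_le hpq]; exact hIcc
  have hif' : IntervalIntegrable f' volume p q :=
    (hf'c.mono huIcc).intervalIntegrable
  have hiB : IntervalIntegrable B volume p q :=
    (hBc.mono huIcc).intervalIntegrable
  have h1 : ∫ t in p..q, f' t = f q - f p :=
    intervalIntegral.integral_eq_sub_of_hasDerivAt (fun t ht => hf t (huIcc ht)) hif'
  have h2 : ∫ t in p..q, B t = φ q - φ p :=
    intervalIntegral.integral_eq_sub_of_hasDerivAt (fun t ht => hφ t (huIcc ht)) hiB
  rw [← h1, ← h2]
  calc |∫ t in p..q, f' t| ≤ ∫ t in p..q, |f' t| :=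
        intervalIntegral.abs_integral_le_integral_abs hpq
    _ ≤ ∫ t in p..q, B t :=
        intervalIntegral.integral_mono_on hpq hif'.abs hiB (fun t ht => hle t (hIcc ht))

theorem stmt0 (a b C : ℝ) (hab : a < b) (hC : 0 < C)
    (g g' g'' : ℝ → ℝ)
    (hg : ∀ x ∈ Set.Ioo a b, HasDerivAt g (g' x) x)
    (hg' : ∀ x ∈ Set.Ioo a b, HasDerivAt g' (g'' x) x)
    (hg''cont : ContinuousOn g'' (Set.Ioo a b))
    (hbound : ∀ x ∈ Set.Ioo a b, |g'' x| ≤ C / (x - a) ^ 2 + C / (b - x) ^ 2)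
    (x₀ : ℝ) (hx₀ : x₀ ∈ Set.Ioo a b) (hx₀' : g' x₀ = 0) :
    ∀ x ∈ Set.Ioo a b,
      |g x - g ((a + b) / 2)| ≤
        C * (-Real.log ((x - a) / (b - a)) - Real.log ((b - x) / (b - a))
          + (b - a) / (x₀ - a) + (b - a) / (b - x₀)) := by
  -- basic positivity facts
  have hne : ∀ t ∈ Set.Ioo a b, t - a ≠ 0 := fun t ht => sub_ne_zero.mpr ht.1.ne'
  have hne' : ∀ t ∈ Set.Ioo a b, b - t ≠ 0 := fun t ht => sub_ne_zero.mpr ht.2.ne'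
  -- antiderivative for step 1
  have hφ₁ : ∀ t ∈ Set.Ioo a b, HasDerivAt (fun t => -C * (t - a)⁻¹ + C * (b - t)⁻¹)
      (C / (t - a) ^ 2 + C / (b - t) ^ 2) t := by
    intro t ht
    have h1 : HasDerivAt (fun t : ℝ => (t - a)⁻¹) (-1 / (t - a) ^ 2) t :=
      ((hasDerivAt_id t).sub_const a).inv (hne t ht)
    have h2 : HasDerivAt (fun t : ℝ => (b - t)⁻¹) (-(-1) / (b - t) ^ 2) t :=
      ((hasDerivAt_id t).const_sub b).inv (hne' t ht)
    have := (h1.const_mul (-C)).add (h2.const_mul C)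
    refine this.congr_deriv ?_
    ring
  have hB₁cont : ContinuousOn (fun t => C / (t - a) ^ 2 + C / (b - t) ^ 2) (Set.Ioo a b) := by
    apply ContinuousOn.add
    · exact continuousOn_const.div (by fun_prop) (fun t ht => pow_ne_zero _ (hne t ht))
    · exact continuousOn_const.div (by fun_prop) (fun t ht => pow_ne_zero _ (hne' t ht))
  have hg'cont : ContinuousOn g' (Set.Ioo a b) := fun t ht =>
    (hg' t ht).continuousAt.continuousWithinAt
  have hgcont : ContinuousOn g (Set.Ioo a b) := fun t ht =>
    (hg t ht).continuousAt.continuousWithinAt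
  -- Step 1: pointwise bound on g'
  have step1 : ∀ x ∈ Set.Ioo a b,
      |g' x| ≤ C / (x - a) + C / (b - x) + C / (x₀ - a) + C / (b - x₀) := by
    intro x hx
    have hxa : 0 < x - a := by linarith [hx.1]
    have hbx : 0 < b - x := by linarith [hx.2]
    have hx₀a : 0 < x₀ - a := by linarith [hx₀.1]
    have hbx₀ : 0 < b - x₀ := by linarith [hx₀.2]
    rcases le_total x₀ x with h | h
    · have key := ftc_abs_bound hg' hg''cont hφ₁ hB₁cont hbound hx₀ hx h
      rw [hx₀'] at key
      simp only [sub_zero] at key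
      have e1 : -C * (x - a)⁻¹ + C * (b - x)⁻¹ - (-C * (x₀ - a)⁻¹ + C * (b - x₀)⁻¹)
          ≤ C / (x - a) + C / (b - x) + C / (x₀ - a) + C / (b - x₀) := by
        simp only [div_eq_mul_inv]
        linarith [mul_pos hC (inv_pos.mpr hxa), mul_pos hC (inv_pos.mpr hbx₀)]
      linarith [key, e1]
    · have key := ftc_abs_bound hg' hg''cont hφ₁ hB₁cont hbound hx hx₀ h
      rw [hx₀', abs_sub_comm] at key
      simp only [sub_zero] at key
      have e1 : -C * (x₀ - a)⁻¹ + C * (b - x₀)⁻¹ - (-C * (x - a)⁻¹ + C * (b - x)⁻¹)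
          ≤ C / (x - a) + C / (b - x) + C / (x₀ - a) + C / (b - x₀) := by
        simp only [div_eq_mul_inv]
        linarith [mul_pos hC (inv_pos.mpr hx₀a), mul_pos hC (inv_pos.mpr hbx)]
      linarith [key, e1]
  -- Step 2
  intro x hx
  have hy₀ : (a + b) / 2 ∈ Set.Ioo a b := ⟨by linarith, by linarith⟩
  have hxa : 0 < x - a := by linarith [hx.1]
  have hbx : 0 < b - x := by linarith [hx.2]
  have hx₀a : 0 < x₀ - a := by linarith [hx₀.1]
  have hbx₀ : 0 < b - x₀ := by linarith [hx₀.2]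
  have hba : 0 < b - a := by linarith
  set K := C / (x₀ - a) + C / (b - x₀) with hKdef
  set φ₂ : ℝ → ℝ := fun t => C * Real.log (t - a) - C * Real.log (b - t) + K * t with hφ₂def
  set B₂ : ℝ → ℝ := fun t => C / (t - a) + C / (b - t) + K with hB₂def
  have hφ₂ : ∀ t ∈ Set.Ioo a b, HasDerivAt φ₂ (B₂ t) t := by
    intro t ht
    have h1 : HasDerivAt (fun t : ℝ => Real.log (t - a)) (1 / (t - a)) t :=
      ((hasDerivAt_id t).sub_const a).log (hne t ht)
    have h2 : HasDerivAt (fun t : ℝ => Real.log (b - t)) ((-1) / (b - t)) t :=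
      ((hasDerivAt_id t).const_sub b).log (hne' t ht)
    have h3 : HasDerivAt (fun t : ℝ => K * t) (K * 1) t :=
      (hasDerivAt_id t).const_mul K
    have := ((h1.const_mul C).sub (h2.const_mul C)).add h3
    refine this.congr_deriv ?_
    simp only [hB₂def]
    ring
  have hB₂cont : ContinuousOn B₂ (Set.Ioo a b) := by
    apply ContinuousOn.add
    apply ContinuousOn.add
    · exact continuousOn_const.div (by fun_prop) (fun t ht => hne t ht)
    · exact continuousOn_const.div (by fun_prop) (fun t ht => hne' t ht)
    · exact continuousOn_const
  have hle₂ : ∀ t ∈ Set.Ioo a b, |g' t| ≤ B₂ t := by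
    intro t ht
    have := step1 t ht
    simp only [hB₂def, hKdef]
    linarith
  have hK : 0 ≤ K := by
    have : 0 < C / (x₀ - a) := by positivity
    have : 0 < C / (b - x₀) := by positivity
    simp only [hKdef]; linarith
  have lmid : ((a : ℝ) + b) / 2 - a = b - (a + b) / 2 := by ring
  have lx : Real.log (x - a) ≤ Real.log (b - a) := Real.log_le_log hxa (by linarith)
  have lbx : Real.log (b - x) ≤ Real.log (b - a) := Real.log_le_log hbx (by linarith)
  have hCl : C * Real.log (x - a) ≤ C * Real.log (b - a) :=
    mul_le_mul_of_nonneg_left lx hC.le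
  have hCl' : C * Real.log (b - x) ≤ C * Real.log (b - a) :=
    mul_le_mul_of_nonneg_left lbx hC.le
  have hKT : K * (b - a) = C * ((b - a) / (x₀ - a)) + C * ((b - a) / (b - x₀)) := by
    simp only [hKdef]; ring
  rw [Real.log_div (ne_of_gt hxa) (ne_of_gt hba), Real.log_div (ne_of_gt hbx) (ne_of_gt hba)]
  rcases le_total ((a + b) / 2) x with h | h
  · have key := ftc_abs_bound hg hg'cont hφ₂ hB₂cont hle₂ hy₀ hx h
    refine key.trans ?_
    simp only [hφ₂def]
    rw [lmid]
    have hKx : K * x - K * ((a + b) / 2) ≤ K * (b - a) := by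
      have h' : x - (a + b) / 2 ≤ b - a := by linarith
      linarith [mul_le_mul_of_nonneg_left h' hK]
    linarith
  · have key := ftc_abs_bound hg hg'cont hφ₂ hB₂cont hle₂ hx hy₀ h
    rw [abs_sub_comm] at key
    refine key.trans ?_
    simp only [hφ₂def]
    rw [lmid]
    have hKx : K * ((a + b) / 2) - K * x ≤ K * (b - a) := by
      have h' : (a + b) / 2 - x ≤ b - a := by linarith
      linarith [mul_le_mul_of_nonneg_left h' hK]
    linarith
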